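/- Fix integers n, d ≥ 1, put a := ⌊n/d⌋, and let λ be a partition of n. The exponent of Φ_{2d}(x) in the reduced summand q_λ(x) := h_λ(x)/G(n,x) (the largest k such that Φ_{2d}(x)^k divides q_λ(x) in ℤ[x]) equals a − Σ_{j≥1, j odd} m_λ(d·j). -/

import Mathlib

open Polynomial Finset

/-- `h_λ(x) = ∏_{i=1}^{n} (1+x^i)^(⌊n/i⌋ - m_λ(i))` in `ℤ[x]`, where `m_λ(i)` is the
multiplicity of the part `i` in the partition `λ` of `n`. -/
noncomputable def hPoly (n : ℕ) (μ : Nat.Partition n) : Polynomial ℤ :=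
  ∏ i ∈ Finset.Icc 1 n, (1 + X ^ i) ^ (n / i - μ.parts.count i)

/-- `G(n,x)`: the (normalized) gcd of the `h_λ(x)` over all partitions `λ` of `n`. -/
noncomputable def GPoly (n : ℕ) : Polynomial ℤ :=
  Finset.univ.gcd (hPoly n)

theorem GPoly_dvd_sum (n : ℕ) :
    ∃ q : Polynomial ℤ, (∑ μ : Nat.Partition n, hPoly n μ) = GPoly n * q :=
  exists_eq_mul_right_of_dvd
    (Finset.dvd_sum fun μ _ => Finset.gcd_dvd (Finset.mem_univ μ))

/-- `num(n,x) = (∑_{λ ⊢ n} h_λ(x)) / G(n,x)`. -/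
noncomputable def numPoly (n : ℕ) : Polynomial ℤ :=
  (GPoly_dvd_sum n).choose

theorem GPoly_dvd_prod (n : ℕ) :
    ∃ q : Polynomial ℤ,
      (∏ i ∈ Finset.Icc 1 n, ((1 : Polynomial ℤ) + X ^ i) ^ (n / i)) = GPoly n * q :=
  exists_eq_mul_right_of_dvd <|
    dvd_trans (Finset.gcd_dvd (Finset.mem_univ (Nat.Partition.indiscrete n)))
      (Finset.prod_dvd_prod_of_dvd _ _ fun _ _ => pow_dvd_pow _ (Nat.sub_le _ _))

/-- `den(n,x) = (∏_{i=1}^{n} (1+x^i)^⌊n/i⌋) / G(n,x)`. -/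
noncomputable def denPoly (n : ℕ) : Polynomial ℤ :=
  (GPoly_dvd_prod n).choose

/-! ### Auxiliary lemmas -/

section Aux

private lemma one_add_X_pow_ne_zero {i : ℕ} (hi : 0 < i) : (1 + X ^ i : Polynomial ℤ) ≠ 0 := by
  intro h
  have h0 := congrArg (Polynomial.eval 1) h
  simp only [Polynomial.eval_add, Polynomial.eval_one, Polynomial.eval_pow,
    Polynomial.eval_X, one_pow, Polynomial.eval_zero] at h0
  omega

private lemma hPoly_ne_zero (n : ℕ) (μ : Nat.Partition n) : hPoly n μ ≠ 0 := by
  unfold hPoly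
  refine Finset.prod_ne_zero_iff.mpr fun i hi => ?_
  have : 1 ≤ i := (Finset.mem_Icc.mp hi).1
  exact pow_ne_zero _ (one_add_X_pow_ne_zero (by omega))

private lemma GPoly_ne_zero (n : ℕ) : GPoly n ≠ 0 := fun h =>
  hPoly_ne_zero n (Nat.Partition.indiscrete n)
    (Finset.gcd_eq_zero_iff.mp h _ (Finset.mem_univ _))

private lemma cyc_prime {m : ℕ} (hm : 0 < m) : Prime (cyclotomic m ℤ) :=
  UniqueFactorizationMonoid.irreducible_iff_prime.mp (cyclotomic.irreducible hm)

private lemma emult_cyc_X_pow_sub_one {m N : ℕ} (hm : 0 < m) (hN : 0 < N) :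
    emultiplicity (cyclotomic m ℤ) (X ^ N - 1 : Polynomial ℤ) = if m ∣ N then 1 else 0 := by
  rw [← prod_cyclotomic_eq_X_pow_sub_one hN, Finset.emultiplicity_prod (cyc_prime hm)]
  have step : ∀ k ∈ N.divisors, emultiplicity (cyclotomic m ℤ) (cyclotomic k ℤ)
      = if k = m then 1 else 0 := by
    intro k hk
    have hk0 : 0 < k := Nat.pos_of_mem_divisors hk
    by_cases h : k = m
    · subst h
      rw [if_pos rfl]
      exact (FiniteMultiplicity.of_prime_left (cyc_prime hk0)
        (cyclotomic.monic k ℤ).ne_zero).emultiplicity_self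
    · rw [if_neg h, emultiplicity_eq_zero]
      intro hdvd
      exact h (cyclotomic_injective (eq_of_monic_of_associated (cyclotomic.monic m ℤ)
        (cyclotomic.monic k ℤ) ((cyclotomic.irreducible hm).associated_of_dvd
          (cyclotomic.irreducible hk0) hdvd))).symm
  rw [Finset.sum_congr rfl step, Finset.sum_ite_eq' N.divisors m (fun _ => 1)]
  simp [Nat.mem_divisors, hN.ne']

private lemma emult_one_add_X_pow {d i : ℕ} (hd : 0 < d) (hi : 0 < i) :
    emultiplicity (cyclotomic (2 * d) ℤ) (1 + X ^ i : Polynomial ℤ) =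
      if d ∣ i ∧ Odd (i / d) then 1 else 0 := by
  have hp := cyc_prime (m := 2 * d) (by omega)
  obtain ⟨e, he⟩ : ∃ e : ℕ, emultiplicity (cyclotomic (2 * d) ℤ)
      (1 + X ^ i : Polynomial ℤ) = e :=
    ⟨_, (FiniteMultiplicity.of_prime_left hp
      (one_add_X_pow_ne_zero hi)).emultiplicity_eq_multiplicity⟩
  have key : (X ^ i - 1) * (1 + X ^ i) = (X ^ (2 * i) - 1 : Polynomial ℤ) := by
    rw [two_mul, pow_add]; ring
  have hmul : (if 2 * d ∣ 2 * i then (1 : ℕ∞) else 0)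
      = (if 2 * d ∣ i then (1 : ℕ∞) else 0) + e := by
    rw [← emult_cyc_X_pow_sub_one (m := 2 * d) (by omega) (by omega),
      ← emult_cyc_X_pow_sub_one (m := 2 * d) (by omega) hi, ← he,
      ← emultiplicity_mul hp, key]
  rw [he]
  by_cases hdi : d ∣ i
  · by_cases hodd : Odd (i / d)
    · have h2d : ¬ (2 * d ∣ i) := by
        rintro ⟨t, ht⟩
        have : i / d = 2 * t := by
          rw [ht, show 2 * d * t = d * (2 * t) by ring, Nat.mul_div_cancel_left _ hd]
        rw [this, Nat.odd_iff] at hodd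
        omega
      have h2i : 2 * d ∣ 2 * i := mul_dvd_mul_left 2 hdi
      rw [if_pos h2i, if_neg h2d, zero_add] at hmul
      rw [if_pos ⟨hdi, hodd⟩]
      exact hmul.symm
    · obtain ⟨t, ht⟩ := hdi
      have hdi' : d ∣ i := ⟨t, ht⟩
      have htd : i / d = t := by rw [ht, Nat.mul_div_cancel_left _ hd]
      have h2d : 2 * d ∣ i := by
        rw [Nat.odd_iff] at hodd
        obtain ⟨s, hs⟩ : ∃ s, t = 2 * s := ⟨t / 2, by omega⟩
        exact ⟨s, by rw [ht, hs]; ring⟩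
      have h2i : 2 * d ∣ 2 * i := (Nat.mul_dvd_mul_iff_left (by omega : 0 < 2)).mpr hdi'
      rw [if_pos h2i, if_pos h2d] at hmul
      rw [if_neg (fun hc => hodd hc.2)]
      have : (1 : ℕ) = 1 + e := by exact_mod_cast hmul
      have he0 : e = 0 := by omega
      rw [he0]; rfl
  · have h2d : ¬ (2 * d ∣ i) := fun hc => hdi ((dvd_mul_left d 2).trans hc)
    have h2i : ¬ (2 * d ∣ 2 * i) := fun hc =>
      hdi ((Nat.mul_dvd_mul_iff_left (by omega : 0 < 2)).mp hc)
    rw [if_neg h2i, if_neg h2d, zero_add] at hmul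
    rw [if_neg (fun hc => hdi hc.1)]
    exact hmul.symm

private lemma sum_reindex (n d : ℕ) (hd : 0 < d) (F : ℕ → ℕ) (hF : ∀ i, n < i → F i = 0) :
    ∑ i ∈ (Finset.Icc 1 n).filter (fun i => d ∣ i ∧ Odd (i / d)), F i
      = ∑ j ∈ (Finset.Icc 1 n).filter (fun j => Odd j), F (d * j) := by
  have h1 : ∑ j ∈ ((Finset.Icc 1 n).filter (fun j => Odd j)).filter (fun j => d * j ≤ n),
      F (d * j) = ∑ j ∈ (Finset.Icc 1 n).filter (fun j => Odd j), F (d * j) := by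
    refine Finset.sum_filter_of_ne fun x hx hne => ?_
    by_contra h
    exact hne (hF _ (by omega))
  rw [← h1]
  refine Finset.sum_nbij' (fun i => i / d) (fun j => d * j) ?_ ?_ ?_ ?_ ?_
  · intro a ha
    simp only [Finset.mem_filter, Finset.mem_Icc] at ha ⊢
    obtain ⟨⟨ha1, han⟩, hdvd, hodd⟩ := ha
    have hda : d ≤ a := Nat.le_of_dvd (by omega) hdvd
    have hc : d * (a / d) = a := Nat.mul_div_cancel' hdvd
    exact ⟨⟨⟨(Nat.one_le_div_iff hd).mpr hda, le_trans (Nat.div_le_self a d) han⟩, hodd⟩,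
      by omega⟩
  · intro j hj
    simp only [Finset.mem_filter, Finset.mem_Icc] at hj ⊢
    obtain ⟨⟨⟨hj1, hjn⟩, hodd⟩, hjd⟩ := hj
    refine ⟨⟨Nat.mul_pos hd hj1, hjd⟩, Dvd.intro _ rfl, ?_⟩
    rw [Nat.mul_div_cancel_left _ hd]
    exact hodd
  · intro a ha
    simp only [Finset.mem_filter] at ha
    exact Nat.mul_div_cancel' ha.2.1
  · intro j _
    exact Nat.mul_div_cancel_left _ hd
  · intro a ha
    simp only [Finset.mem_filter] at ha
    rw [Nat.mul_div_cancel' ha.2.1]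

private lemma parts_le {n : ℕ} (μ : Nat.Partition n) {a : ℕ} (ha : a ∈ μ.parts) : a ≤ n :=
  μ.parts_sum ▸ Multiset.le_sum_of_mem ha

private lemma count_mul_sum (n : ℕ) (μ : Nat.Partition n) :
    ∑ i ∈ Finset.Icc 1 n, μ.parts.count i * i = n := by
  have hmem : ∀ a ∈ μ.parts, a ∈ Finset.Icc 1 n := fun a ha =>
    Finset.mem_Icc.mpr ⟨μ.parts_pos ha, parts_le μ ha⟩
  have h1 : ∑ i ∈ μ.parts.toFinset, μ.parts.count i * i
      = ∑ i ∈ Finset.Icc 1 n, μ.parts.count i * i := by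
    refine Finset.sum_subset (fun a ha => hmem a (Multiset.mem_toFinset.mp ha))
      (fun x _ hx => ?_)
    rw [Multiset.count_eq_zero.mpr (fun h => hx (Multiset.mem_toFinset.mpr h)), zero_mul]
  rw [← h1]
  have h2 := Finset.sum_multiset_map_count μ.parts (id : ℕ → ℕ)
  rw [Multiset.map_id] at h2
  have h3 : μ.parts.sum = ∑ i ∈ μ.parts.toFinset, μ.parts.count i * i := by
    rw [h2]; simp [smul_eq_mul]
  rw [← h3, μ.parts_sum]

private lemma count_le_div {n : ℕ} (μ : Nat.Partition n) {i : ℕ} (hi : 0 < i) :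
    μ.parts.count i ≤ n / i := by
  rcases le_or_gt i n with h | h
  · have hmem : i ∈ Finset.Icc 1 n := Finset.mem_Icc.mpr ⟨hi, h⟩
    have := Finset.single_le_sum (f := fun i => μ.parts.count i * i)
      (fun _ _ => Nat.zero_le _) hmem
    rw [count_mul_sum n μ] at this
    exact (Nat.le_div_iff_mul_le hi).mpr this
  · rw [Multiset.count_eq_zero.mpr (fun hc => absurd (parts_le μ hc) (by omega))]
    exact Nat.zero_le _

private lemma sum_count_le (n d : ℕ) (hd : 0 < d) (μ : Nat.Partition n) :
    ∑ j ∈ (Finset.Icc 1 n).filter (fun j => Odd j), μ.parts.count (d * j) ≤ n / d := by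
  rw [Nat.le_div_iff_mul_le hd]
  set T := (Finset.Icc 1 n).filter (fun j => Odd j) with hT
  have step1 : (∑ j ∈ T, μ.parts.count (d * j)) * d
      ≤ ∑ j ∈ T, μ.parts.count (d * j) * (d * j) := by
    rw [Finset.sum_mul]
    refine Finset.sum_le_sum fun j hj => ?_
    have hj1 : 1 ≤ j := (Finset.mem_Icc.mp (Finset.mem_filter.mp hj).1).1
    exact Nat.mul_le_mul_left _ (Nat.le_mul_of_pos_right d (by omega))
  refine le_trans step1 ?_
  have hF : ∀ i, n < i → μ.parts.count i * i = 0 := fun i hi => by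
    rw [Multiset.count_eq_zero.mpr (fun hc => absurd (parts_le μ hc) (by omega)), zero_mul]
  rw [hT, ← sum_reindex n d hd (fun i => μ.parts.count i * i) hF]
  calc ∑ i ∈ (Finset.Icc 1 n).filter (fun i => d ∣ i ∧ Odd (i / d)), μ.parts.count i * i
      ≤ ∑ i ∈ Finset.Icc 1 n, μ.parts.count i * i :=
        Finset.sum_le_sum_of_subset (Finset.filter_subset _ _)
    _ = n := count_mul_sum n μ

/-- The extremal partition: `⌊n/d⌋` parts equal to `d` and `n % d` parts equal to `1`. -/
private def lam0 (n d : ℕ) (hd : 0 < d) : Nat.Partition n where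
  parts := Multiset.replicate (n / d) d + Multiset.replicate (n % d) 1
  parts_pos := by
    intro i hi
    rcases Multiset.mem_add.mp hi with h | h
    · rw [Multiset.eq_of_mem_replicate h]; exact hd
    · rw [Multiset.eq_of_mem_replicate h]; exact one_pos
  parts_sum := by
    rw [Multiset.sum_add, Multiset.sum_replicate, Multiset.sum_replicate,
      smul_eq_mul, smul_eq_mul, mul_one, mul_comm]
    exact Nat.div_add_mod n d

private lemma lam0_count (n d : ℕ) (hn : 1 ≤ n) (hd : 1 ≤ d) :
    ∑ j ∈ (Finset.Icc 1 n).filter (fun j => Odd j),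
      (lam0 n d hd).parts.count (d * j) = n / d := by
  have h1 : (1 : ℕ) ∈ (Finset.Icc 1 n).filter (fun j => Odd j) :=
    Finset.mem_filter.mpr ⟨Finset.mem_Icc.mpr ⟨le_refl 1, hn⟩, odd_one⟩
  rw [Finset.sum_eq_single_of_mem 1 h1 ?_]
  · simp only [lam0, Multiset.count_add, Multiset.count_replicate, mul_one]
    rw [if_pos trivial]
    rcases eq_or_ne d 1 with rfl | hne
    · rw [if_pos rfl]
      omega
    · rw [if_neg (fun h => hne h.symm), add_zero]
  · intro j hj hne
    simp only [Finset.mem_filter, Finset.mem_Icc] at hj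
    have hne1 : d * j ≠ d := fun h => hne (Nat.eq_of_mul_eq_mul_left hd (by omega))
    have hne2 : d * j ≠ 1 := fun h => hne (Nat.dvd_one.mp (h ▸ dvd_mul_left j d))
    simp only [lam0, Multiset.count_add, Multiset.count_replicate]
    rw [if_neg (fun h => hne1 h.symm), if_neg (fun h => hne2 h.symm)]
    rfl

private lemma mult_hPoly (n d : ℕ) (hn : 1 ≤ n) (hd : 1 ≤ d) (μ : Nat.Partition n) :
    multiplicity (cyclotomic (2 * d) ℤ) (hPoly n μ)
      = ∑ j ∈ (Finset.Icc 1 n).filter (fun j => Odd j),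
          (n / (d * j) - μ.parts.count (d * j)) := by
  apply multiplicity_eq_of_emultiplicity_eq_some
  unfold hPoly
  rw [Finset.emultiplicity_prod (cyc_prime (by omega))]
  have step : ∀ i ∈ Finset.Icc 1 n,
      emultiplicity (cyclotomic (2 * d) ℤ) ((1 + X ^ i) ^ (n / i - μ.parts.count i))
        = ((if d ∣ i ∧ Odd (i / d) then (n / i - μ.parts.count i) else 0 : ℕ) : ℕ∞) := by
    intro i hi
    have hi1 : 1 ≤ i := (Finset.mem_Icc.mp hi).1
    rw [emultiplicity_pow (cyc_prime (by omega)),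
      emult_one_add_X_pow (by omega) (by omega)]
    split_ifs <;> simp
  rw [Finset.sum_congr rfl step, ← Nat.cast_sum]
  have hre : (∑ i ∈ Finset.Icc 1 n, if d ∣ i ∧ Odd (i / d) then n / i - μ.parts.count i else 0)
      = ∑ j ∈ (Finset.Icc 1 n).filter (fun j => Odd j),
          (n / (d * j) - μ.parts.count (d * j)) := by
    rw [← Finset.sum_filter]
    refine sum_reindex n d (by omega) (fun i => n / i - μ.parts.count i) fun i hi => ?_
    show n / i - μ.parts.count i = 0
    rw [Nat.div_eq_of_lt (by omega)]
    exact Nat.zero_sub _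
  rw [hre]

private lemma nd_le_S (n d : ℕ) (hn : 1 ≤ n) :
    n / d ≤ ∑ j ∈ (Finset.Icc 1 n).filter (fun j => Odd j), n / (d * j) := by
  have h1 : (1 : ℕ) ∈ (Finset.Icc 1 n).filter (fun j => Odd j) :=
    Finset.mem_filter.mpr ⟨Finset.mem_Icc.mpr ⟨le_refl 1, hn⟩, odd_one⟩
  have := Finset.single_le_sum (f := fun j => n / (d * j)) (fun _ _ => Nat.zero_le _) h1
  simpa using this

private lemma E_add_C (n d : ℕ) (hd : 1 ≤ d) (μ : Nat.Partition n) :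
    (∑ j ∈ (Finset.Icc 1 n).filter (fun j => Odd j),
        (n / (d * j) - μ.parts.count (d * j)))
      + (∑ j ∈ (Finset.Icc 1 n).filter (fun j => Odd j), μ.parts.count (d * j))
      = ∑ j ∈ (Finset.Icc 1 n).filter (fun j => Odd j), n / (d * j) := by
  rw [← Finset.sum_add_distrib]
  refine Finset.sum_congr rfl fun j hj => ?_
  have hj1 : 1 ≤ j := (Finset.mem_Icc.mp (Finset.mem_filter.mp hj).1).1
  have := count_le_div μ (i := d * j) (by positivity)
  omega

private lemma mult_GPoly (n d : ℕ) (hn : 1 ≤ n) (hd : 1 ≤ d) :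
    multiplicity (cyclotomic (2 * d) ℤ) (GPoly n)
      = (∑ j ∈ (Finset.Icc 1 n).filter (fun j => Odd j), n / (d * j)) - n / d := by
  have hp := cyc_prime (m := 2 * d) (by omega)
  have hfinG := FiniteMultiplicity.of_prime_left hp (GPoly_ne_zero n)
  refine hfinG.multiplicity_eq_iff.mpr ⟨?_, ?_⟩
  · refine Finset.dvd_gcd fun μ _ => ?_
    refine (FiniteMultiplicity.of_prime_left hp
      (hPoly_ne_zero n μ)).pow_dvd_iff_le_multiplicity.mpr ?_
    rw [mult_hPoly n d hn hd μ]
    have h1 := E_add_C n d hd μ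
    have h2 := sum_count_le n d (by omega) μ
    omega
  · intro hdvd
    have hdvd2 : cyclotomic (2 * d) ℤ
        ^ ((∑ j ∈ (Finset.Icc 1 n).filter (fun j => Odd j), n / (d * j)) - n / d + 1)
        ∣ hPoly n (lam0 n d hd) :=
      dvd_trans hdvd (Finset.gcd_dvd (Finset.mem_univ _))
    have hle := (FiniteMultiplicity.of_prime_left hp
      (hPoly_ne_zero n (lam0 n d hd))).le_multiplicity_of_pow_dvd hdvd2
    rw [mult_hPoly n d hn hd] at hle
    have h1 := E_add_C n d hd (lam0 n d hd)
    have h2 := lam0_count n d hn hd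
    have h3 := nd_le_S n d hn
    omega

end Aux

/-- For `n, d ≥ 1`, `a := ⌊n/d⌋` and a partition `λ` of `n`, the exponent of `Φ_{2d}(x)`
in the reduced summand `q_λ(x) := h_λ(x)/G(n,x)` equals `a − Σ_{j≥1, j odd} m_λ(d·j)`
(a nonnegative integer).  The quotient `q_λ` is characterized by `h_λ = G(n,x)·q_λ`,
and the sum over odd `j ≥ 1` is truncated at `j = n` since `m_λ(d·j) = 0` for `d·j > n`. -/
theorem exponent_of_cyclotomic_in_qPoly (n d : ℕ) (hn : 1 ≤ n) (hd : 1 ≤ d)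
    (μ : Nat.Partition n) (q : Polynomial ℤ) (hq : hPoly n μ = GPoly n * q) :
    ∃ k : ℕ,
      (k : ℤ) = (n / d : ℕ) -
          ∑ j ∈ (Finset.Icc 1 n).filter (fun j => Odd j), (μ.parts.count (d * j) : ℤ) ∧
      Polynomial.cyclotomic (2 * d) ℤ ^ k ∣ q ∧
      ¬ Polynomial.cyclotomic (2 * d) ℤ ^ (k + 1) ∣ q := by
  have hp := cyc_prime (m := 2 * d) (by omega)
  have hqne : q ≠ 0 := fun h => hPoly_ne_zero n μ (by rw [hq, h, mul_zero])
  have hfinq := FiniteMultiplicity.of_prime_left hp hqne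
  have hmul : multiplicity (cyclotomic (2 * d) ℤ) (hPoly n μ)
      = multiplicity (cyclotomic (2 * d) ℤ) (GPoly n)
        + multiplicity (cyclotomic (2 * d) ℤ) q := by
    rw [hq]
    exact multiplicity_mul hp
      (hq ▸ FiniteMultiplicity.of_prime_left hp (hPoly_ne_zero n μ))
  rw [mult_hPoly n d hn hd μ, mult_GPoly n d hn hd] at hmul
  have h1 := E_add_C n d hd μ
  have h2 := sum_count_le n d (by omega) μ
  have h3 := nd_le_S n d hn
  refine ⟨multiplicity (cyclotomic (2 * d) ℤ) q, ?_,
    pow_multiplicity_dvd _ _, hfinq.multiplicity_lt_iff_not_dvd.mp (Nat.lt_succ_self _)⟩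
  have hcast : (∑ j ∈ (Finset.Icc 1 n).filter (fun j => Odd j),
      (μ.parts.count (d * j) : ℤ))
      = ((∑ j ∈ (Finset.Icc 1 n).filter (fun j => Odd j), μ.parts.count (d * j) : ℕ) : ℤ) :=
    (Nat.cast_sum _ _).symm
  rw [hcast]
  omega
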